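/- For every λ₁, λ₂ > 0 and s, t > 0, one has (λ₁θ₁(s,t) − λ₂θ₂(s,t))(s − t) ≤ (max{λ₁,λ₂} − min{λ₁,λ₂}) θ(s,t). -/

import Mathlib

/-- The logarithmic mean, extended by `θ(s,s) = s` and `θ(s,0) = θ(0,t) = 0`. -/
noncomputable def logMean (s t : ℝ) : ℝ :=
  if s = t then s else if s = 0 ∨ t = 0 then 0 else (s - t) / (Real.log s - Real.log t)

/-- Partial derivative of the logarithmic mean in the first variable. -/
noncomputable def logMean₁ (s t : ℝ) : ℝ := deriv (fun x => logMean x t) s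

/-- Partial derivative of the logarithmic mean in the second variable. -/
noncomputable def logMean₂ (s t : ℝ) : ℝ := deriv (fun y => logMean s y) t

lemma aux_hasDeriv {y : ℝ} (hy0 : y ≠ 0) : HasDerivAt (fun x : ℝ => x - 1/x - 2 * Real.log x)
    (1 - (-(1/y^2)) - 2 * (1/y)) y := by
  have := ((hasDerivAt_id y).sub ((hasDerivAt_inv hy0))).sub
    ((Real.hasDerivAt_log hy0).const_mul 2)
  simp only [one_div] at *
  exact this

lemma two_log_le_sub_inv {x : ℝ} (hx : 1 ≤ x) : 2 * Real.log x ≤ x - 1/x := by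
  have key : MonotoneOn (fun x : ℝ => x - 1/x - 2 * Real.log x) (Set.Ici 1) := by
    apply monotoneOn_of_deriv_nonneg (convex_Ici 1)
    · apply ContinuousOn.sub
      · apply ContinuousOn.sub continuousOn_id
        exact continuousOn_const.div continuousOn_id (fun y hy => by
          have : (1:ℝ) ≤ y := hy; positivity)
      · exact (continuousOn_const.mul (Real.continuousOn_log.mono (by
          intro y hy; simp at hy ⊢; linarith [hy])))
    · intro y hy
      simp only [interior_Ici, Set.mem_Ioi] at hy
      exact (aux_hasDeriv (by linarith : y ≠ 0)).differentiableAt.differentiableWithinAt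
    · intro y hy
      simp only [interior_Ici, Set.mem_Ioi] at hy
      have hy0 : y ≠ 0 := by linarith
      rw [(aux_hasDeriv hy0).deriv]
      have hyp : 0 < y := by linarith
      have h2 : 1 - (-(1/y^2)) - 2 * (1/y) = (1 - 1/y)^2 := by field_simp; ring
      rw [h2]; positivity
  have h := key (Set.self_mem_Ici) (Set.mem_Ici.mpr hx) hx
  simp only [one_div] at h ⊢
  simp at h
  linarith [h]

lemma harm_le {s t : ℝ} (ht : 0 < t) (hts : t < s) :
    2 * s * t * (Real.log s - Real.log t) ≤ (s - t) * (s + t) := by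
  have hs : 0 < s := lt_trans ht hts
  have hx : 1 ≤ s / t := (one_le_div ht).mpr hts.le
  have h := two_log_le_sub_inv hx
  rw [Real.log_div hs.ne' ht.ne'] at h
  have h2 : s / t - 1 / (s / t) = (s - t) * (s + t) / (s * t) := by
    field_simp; ring
  rw [h2] at h
  have := mul_le_mul_of_nonneg_right h (le_of_lt (mul_pos hs ht))
  calc 2 * s * t * (Real.log s - Real.log t)
      = 2 * (Real.log s - Real.log t) * (s * t) := by ring
    _ ≤ ((s - t) * (s + t) / (s * t)) * (s * t) := this
    _ = (s - t) * (s + t) := by field_simp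

lemma logMean_symm (s t : ℝ) : logMean s t = logMean t s := by
  by_cases h : s = t
  · subst h; rfl
  · simp only [logMean, h, Ne.symm h, if_false, or_comm]
    rw [show Real.log t - Real.log s = -(Real.log s - Real.log t) by ring,
        show t - s = -(s - t) by ring, neg_div_neg_eq]

lemma logMean₁_symm (s t : ℝ) : logMean₁ s t = logMean₂ t s := by
  simp only [logMean₁, logMean₂]
  congr 1
  funext x
  exact logMean_symm x t

lemma logMean₁_eq {s t : ℝ} (hs : 0 < s) (ht : 0 < t) (hst : s ≠ t) :
    logMean₁ s t = ((Real.log s - Real.log t) - (s - t) * s⁻¹) / (Real.log s - Real.log t)^2 := by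
  have hL : Real.log s - Real.log t ≠ 0 := by
    intro h
    exact hst (Real.log_injOn_pos (Set.mem_Ioi.mpr hs) (Set.mem_Ioi.mpr ht) (by linarith))
  have hEv : (fun x => logMean x t) =ᶠ[nhds s]
      (fun x => (x - t) / (Real.log x - Real.log t)) := by
    filter_upwards [eventually_ne_nhds hst, eventually_ne_nhds hs.ne'] with x hxt hx0
    simp [logMean, hxt, hx0, ht.ne']
  have hd : HasDerivAt (fun x => (x - t) / (Real.log x - Real.log t))
      ((1 * (Real.log s - Real.log t) - (s - t) * s⁻¹) / (Real.log s - Real.log t)^2) s :=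
    ((hasDerivAt_id s).sub_const t).div ((Real.hasDerivAt_log hs.ne').sub_const _) hL
  rw [logMean₁, hEv.deriv_eq, hd.deriv, one_mul]

lemma logMean₂_eq {s t : ℝ} (hs : 0 < s) (ht : 0 < t) (hst : s ≠ t) :
    logMean₂ s t = (-(Real.log s - Real.log t) + (s - t) * t⁻¹) / (Real.log s - Real.log t)^2 := by
  rw [show logMean₂ s t = logMean₁ t s from (logMean₁_symm t s).symm,
      logMean₁_eq ht hs (Ne.symm hst)]
  rw [show Real.log t - Real.log s = -(Real.log s - Real.log t) by ring, neg_sq]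
  congr 1
  ring

lemma key_lt (l₁ l₂ s t : ℝ) (hl₁ : 0 < l₁) (hl₂ : 0 < l₂) (ht : 0 < t) (hts : t < s) :
    (l₁ * logMean₁ s t - l₂ * logMean₂ s t) * (s - t) ≤
      (max l₁ l₂ - min l₁ l₂) * logMean s t := by
  have hs : 0 < s := lt_trans ht hts
  have hst : s ≠ t := ne_of_gt hts
  have hD : 0 < s - t := by linarith
  set L := Real.log s - Real.log t with hLdef
  have hL : 0 < L := sub_pos.mpr (Real.log_lt_log ht hts)
  have harm : 2 * s * t * L ≤ (s - t) * (s + t) := harm_le ht hts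
  have hM : logMean s t = (s - t) / L := by simp [logMean, hst, hs.ne', ht.ne', hLdef]
  rw [logMean₁_eq hs ht hst, logMean₂_eq hs ht hst, hM, ← hLdef]
  rcases le_total l₁ l₂ with h12 | h12
  · rw [max_eq_right h12, min_eq_left h12]
    have key2 : (l₁ * (s*t*L - t*(s-t)) + l₂ * (s*t*L - s*(s-t))) ≤ (l₂ - l₁) * (s*t*L) := by
      nlinarith [mul_le_mul_of_nonneg_left harm hl₁.le,
        mul_le_mul_of_nonneg_right (sub_nonneg.mpr h12) (mul_pos hs hD).le]
    have goalEq : (l₁ * ((L - (s - t) * s⁻¹) / L^2) - l₂ * ((-L + (s - t) * t⁻¹) / L^2)) * (s - t)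
        = ((l₁ * (s*t*L - t*(s-t)) + l₂ * (s*t*L - s*(s-t))) * (s - t)) / (s*t*L^2) := by
      field_simp
      ring
    rw [goalEq, show (l₂ - l₁) * ((s - t) / L) = ((l₂ - l₁) * (s - t)) / L by ring]
    rw [div_le_div_iff₀ (by positivity) hL]
    nlinarith [mul_le_mul_of_nonneg_right key2 (mul_pos hD hL).le]
  · rw [max_eq_left h12, min_eq_right h12]
    have key2 : (l₁ * (s*t*L - t*(s-t)) + l₂ * (s*t*L - s*(s-t))) ≤ (l₁ - l₂) * (s*t*L) := by
      nlinarith [mul_le_mul_of_nonneg_left harm hl₂.le,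
        mul_le_mul_of_nonneg_right (sub_nonneg.mpr h12) (mul_pos ht hD).le]
    have goalEq : (l₁ * ((L - (s - t) * s⁻¹) / L^2) - l₂ * ((-L + (s - t) * t⁻¹) / L^2)) * (s - t)
        = ((l₁ * (s*t*L - t*(s-t)) + l₂ * (s*t*L - s*(s-t))) * (s - t)) / (s*t*L^2) := by
      field_simp
      ring
    rw [goalEq, show (l₁ - l₂) * ((s - t) / L) = ((l₁ - l₂) * (s - t)) / L by ring]
    rw [div_le_div_iff₀ (by positivity) hL]
    nlinarith [mul_le_mul_of_nonneg_right key2 (mul_pos hD hL).le]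

theorem logMean_deriv_combination_bound (l₁ l₂ s t : ℝ) (hl₁ : 0 < l₁) (hl₂ : 0 < l₂)
    (hs : 0 < s) (ht : 0 < t) :
    (l₁ * logMean₁ s t - l₂ * logMean₂ s t) * (s - t) ≤
      (max l₁ l₂ - min l₁ l₂) * logMean s t := by
  rcases lt_trichotomy s t with h | h | h
  · have key := key_lt l₂ l₁ t s hl₂ hl₁ hs h
    rw [logMean₁_symm t s, show logMean₂ t s = logMean₁ s t from (logMean₁_symm s t).symm,
        ← logMean_symm s t, max_comm, min_comm] at key
    calc (l₁ * logMean₁ s t - l₂ * logMean₂ s t) * (s - t)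
        = (l₂ * logMean₂ s t - l₁ * logMean₁ s t) * (t - s) := by ring
      _ ≤ (max l₁ l₂ - min l₁ l₂) * logMean s t := key
  · subst h
    rw [sub_self, mul_zero]
    have hM : logMean s s = s := by simp [logMean]
    rw [hM]
    exact mul_nonneg (sub_nonneg.mpr (min_le_max)) hs.le
  · exact key_lt l₁ l₂ s t hl₁ hl₂ ht h
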